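/- Let ψ ∈ Ω∞ and let κ ∈ 𝒦 satisfy lim_{n→∞} ψ(κ(n))/ψ(κ(n+1)) = 1. Then for every x ∈ M(ψ), limsup_{t→∞} φ(x)(t) = sup{ f_{L,κ}(x) : L ∈ BL(ℝ₊) }. (The left-hand side equals the Riesz semi-norm ρ₁(x), the distance in M(ψ) from x to the closure M₁(ψ) of M(ψ) ∩ L¹([0,∞)).) -/

import Mathlib

open MeasureTheory Filter Set

noncomputable section

/-- `f` is bounded and continuous on `[0,∞)`, i.e. (the restriction of) `f`
belongs to `C_b([0,∞))`. -/
def IsCb (f : ℝ → ℝ) : Prop :=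
  ContinuousOn f (Ici 0) ∧ ∃ M : ℝ, ∀ t ∈ Ici (0:ℝ), |f t| ≤ M

/-- Bounded real sequences, i.e. elements of `ℓ∞(ℕ)`. -/
def IsBddSeq (a : ℕ → ℝ) : Prop := ∃ M : ℝ, ∀ n, |a n| ≤ M

/-- A Banach limit on `C_b([0,∞))`: a positive linear translation-invariant
functional with `L(1) = 1`.  (The underlying map is defined on all of `ℝ → ℝ`;
the axioms only refer to its values on bounded continuous functions on `[0,∞)`.) -/
structure BanachLimitR where
  toFun : (ℝ → ℝ) → ℝ
  map_add : ∀ f g : ℝ → ℝ, IsCb f → IsCb g →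
    toFun (fun t => f t + g t) = toFun f + toFun g
  map_smul : ∀ (c : ℝ) (f : ℝ → ℝ), IsCb f → toFun (fun t => c * f t) = c * toFun f
  pos : ∀ f : ℝ → ℝ, IsCb f → (∀ t ∈ Ici (0:ℝ), 0 ≤ f t) → 0 ≤ toFun f
  map_one : toFun (fun _ => 1) = 1
  shift_inv : ∀ f : ℝ → ℝ, IsCb f → ∀ s : ℝ, 0 ≤ s → toFun (fun t => f (t + s)) = toFun f

/-- A Banach limit on `ℓ∞(ℕ)`: a positive linear shift-invariant functional
with `L'(1) = 1`. -/
structure BanachLimitN where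
  toFun : (ℕ → ℝ) → ℝ
  map_add : ∀ a b : ℕ → ℝ, IsBddSeq a → IsBddSeq b →
    toFun (fun n => a n + b n) = toFun a + toFun b
  map_smul : ∀ (c : ℝ) (a : ℕ → ℝ), IsBddSeq a → toFun (fun n => c * a n) = c * toFun a
  pos : ∀ a : ℕ → ℝ, IsBddSeq a → (∀ n, 0 ≤ a n) → 0 ≤ toFun a
  map_one : toFun (fun _ => 1) = 1
  shift_inv : ∀ a : ℕ → ℝ, IsBddSeq a → toFun (fun n => a (n + 1)) = toFun a

/-- An element of `SC_b^*([0,∞))`: a positive linear functional on `C_b([0,∞))`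
with `γ(1) = 1` vanishing on `C₀([0,∞))`. -/
structure SCbStar where
  toFun : (ℝ → ℝ) → ℝ
  map_add : ∀ f g : ℝ → ℝ, IsCb f → IsCb g →
    toFun (fun t => f t + g t) = toFun f + toFun g
  map_smul : ∀ (c : ℝ) (f : ℝ → ℝ), IsCb f → toFun (fun t => c * f t) = c * toFun f
  pos : ∀ f : ℝ → ℝ, IsCb f → (∀ t ∈ Ici (0:ℝ), 0 ≤ f t) → 0 ≤ toFun f
  map_one : toFun (fun _ => 1) = 1
  vanish : ∀ f : ℝ → ℝ, IsCb f → Tendsto f atTop (nhds 0) → toFun f = 0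

/-- A positive linear functional on `C_b([0,∞))`. -/
structure PosLinFunc where
  toFun : (ℝ → ℝ) → ℝ
  map_add : ∀ f g : ℝ → ℝ, IsCb f → IsCb g →
    toFun (fun t => f t + g t) = toFun f + toFun g
  map_smul : ∀ (c : ℝ) (f : ℝ → ℝ), IsCb f → toFun (fun t => c * f t) = c * toFun f
  pos : ∀ f : ℝ → ℝ, IsCb f → (∀ t ∈ Ici (0:ℝ), 0 ≤ f t) → 0 ≤ toFun f

/-- `ψ ∈ Ω_∞`: concave on `[0,∞)`, nonnegative, `ψ(t) → 0` as `t → 0⁺` and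
`ψ(t) → ∞` as `t → ∞`. -/
def OmegaInf (ψ : ℝ → ℝ) : Prop :=
  ConcaveOn ℝ (Ici 0) ψ ∧ (∀ t ∈ Ici (0:ℝ), 0 ≤ ψ t) ∧
    Tendsto ψ (nhdsWithin 0 (Ioi 0)) (nhds 0) ∧ Tendsto ψ atTop atTop

/-- The decreasing rearrangement `x*` of a measurable function `x` on `[0,∞)`. -/
def decRearr (x : ℝ → ℝ) (t : ℝ) : ℝ :=
  sInf {s : ℝ | 0 ≤ s ∧ volume {u : ℝ | 0 ≤ u ∧ s < |x u|} ≤ ENNReal.ofReal t}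

/-- The weighted mean function `φ(x)(t) = (1/ψ(t)) ∫₀ᵗ x*(s) ds`. -/
def phiW (ψ x : ℝ → ℝ) (t : ℝ) : ℝ := (∫ s in (0:ℝ)..t, decRearr x s) / ψ t

/-- Membership in the Marcinkiewicz space `M(ψ)`. -/
def MemM (ψ x : ℝ → ℝ) : Prop :=
  Measurable x ∧ ∃ M : ℝ, ∀ t > (0:ℝ), phiW ψ x t ≤ M

/-- Membership in the positive cone `M₊(ψ)`. -/
def MemMplus (ψ x : ℝ → ℝ) : Prop := MemM ψ x ∧ ∀ t ∈ Ici (0:ℝ), 0 ≤ x t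

/-- The Marcinkiewicz norm `‖x‖_{M(ψ)} = sup_{t>0} φ(x)(t)`. -/
def MNorm (ψ x : ℝ → ℝ) : ℝ := ⨆ t > (0:ℝ), phiW ψ x t

/-- `κ ∈ 𝒦`: strictly increasing, invertible (as a map of `[0,∞)` onto itself),
differentiable, unbounded, with `κ(0) = 0`. -/
def MemK (κ : ℝ → ℝ) : Prop :=
  StrictMonoOn κ (Ici 0) ∧ κ 0 = 0 ∧ MapsTo κ (Ici 0) (Ici 0) ∧
    SurjOn κ (Ici 0) (Ici 0) ∧ DifferentiableOn ℝ κ (Ici 0) ∧ Tendsto κ atTop atTop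

/-- `f_{L,κ}(x) = L(φ_κ(x))` for a Banach limit `L` on `C_b([0,∞))`; the function
`φ_κ(x)`, bounded and continuous on `(0,∞)`, is fed to `L` as `t ↦ φ_κ(x)(max t 1)`. -/
def fL (L : BanachLimitR) (ψ κ x : ℝ → ℝ) : ℝ :=
  L.toFun fun t => phiW ψ x (κ (max t 1))

/-- `f_{L',κ}(x) = L'({φ(x)(κ(n))}ₙ)` for a Banach limit `L'` on `ℓ∞(ℕ)`. -/
def fLN (L' : BanachLimitN) (ψ κ x : ℝ → ℝ) : ℝ :=
  L'.toFun fun n => phiW ψ x (κ n)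

/-- `κ` has restricted growth with respect to `ψ` (`κ ∈ R(ψ)`): the sequence
`ψ(κ(n))/ψ(κ(n+1))` is almost convergent to `1`. -/
def RestrictedGrowth (ψ κ : ℝ → ℝ) : Prop :=
  ∀ L' : BanachLimitN, L'.toFun (fun n => ψ (κ n) / ψ (κ ((n:ℝ) + 1))) = 1

/-- `κ` has dominated growth with respect to `ψ` (`κ ∈ D(ψ)`):
`(ψ∘κ)'(t)/(ψ∘κ)(t) < C/t` for some `C > 0` and all `t > 0`. -/
def DominatedGrowth (ψ κ : ℝ → ℝ) : Prop :=
  (∀ t > (0:ℝ), DifferentiableAt ℝ (fun u => ψ (κ u)) t) ∧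
    ∃ C > (0:ℝ), ∀ t > (0:ℝ), deriv (fun u => ψ (κ u)) t / ψ (κ t) < C / t

/-- `κ` is of exponential increase: `κ(t + C) > 2κ(t)` for some `C > 0` and all `t > 0`. -/
def ExpIncrease (κ : ℝ → ℝ) : Prop := ∃ C > (0:ℝ), ∀ t > (0:ℝ), 2 * κ t < κ (t + C)

/-- The piecewise linear extension map `p : ℓ∞(ℕ) → C_b([0,∞))`. -/
def plExt (a : ℕ → ℝ) (t : ℝ) : ℝ :=
  a ⌊t⌋₊ + (a (⌊t⌋₊ + 1) - a ⌊t⌋₊) * (t - (⌊t⌋₊ : ℝ))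

/-- The Cesàro mean `C(g)(μ) = (1/μ) ∫₀^μ g(s) ds` (with `C(g)(0) := g(0)`). -/
def cesaro (g : ℝ → ℝ) (μ : ℝ) : ℝ :=
  if μ = 0 then g 0 else (∫ s in (0:ℝ)..μ, g s) / μ

/-- `M_k(g)(λ) = (1/k(λ)) ∫₀^λ g(s) k'(s) ds` (with `M_k(g)(0) := g(0)`). -/
def MkFun (k g : ℝ → ℝ) (l : ℝ) : ℝ :=
  if l = 0 then g 0 else (∫ s in (0:ℝ)..l, g s * deriv k s) / k l

/-- The Connes-Dixmier functional `τ_{γ,k}(x) = γ(M_k(φ(x)))`; the function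
`M_k(φ(x))`, bounded and continuous on `(0,∞)`, is fed to `γ` as `t ↦ M_k(φ(x))(max t 1)`. -/
def tauCD (γ : SCbStar) (ψ k x : ℝ → ℝ) : ℝ :=
  γ.toFun fun t => MkFun k (phiW ψ x) (max t 1)

/-- A set `Λ` of Banach limits has the Cesàro limit property if for each
`g ∈ C_b([0,∞))` both `liminf C(g)` and `limsup C(g)` are attained as values `L(g)`, `L ∈ Λ`. -/
def CesaroLimitProp (Λ : Set BanachLimitR) : Prop :=
  ∀ g : ℝ → ℝ, IsCb g →
    (∃ L ∈ Λ, L.toFun g = liminf (cesaro g) atTop) ∧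
    (∃ L ∈ Λ, L.toFun g = limsup (cesaro g) atTop)

/-- Dilation invariance of an element of `SC_b^*([0,∞))`. -/
def DilationInvariant (ω : SCbStar) : Prop :=
  ∀ g : ℝ → ℝ, IsCb g → ∀ a : ℝ, 0 < a → ω.toFun (fun t => g (a * t)) = ω.toFun g

open scoped Pointwise Classical

namespace BLAux


/-- Functions bounded on `[0,∞)`. -/
def V : Submodule ℝ (ℝ → ℝ) where
  carrier := {f | ∃ M : ℝ, ∀ t ∈ Ici (0:ℝ), |f t| ≤ M}
  add_mem' := by
    rintro f g ⟨M, hM⟩ ⟨N, hN⟩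
    exact ⟨M + N, fun t ht => (abs_add_le _ _).trans (add_le_add (hM t ht) (hN t ht))⟩
  zero_mem' := ⟨0, fun t _ => by simp⟩
  smul_mem' := by
    rintro c f ⟨M, hM⟩
    refine ⟨|c| * M, fun t ht => ?_⟩
    rw [Pi.smul_apply, smul_eq_mul, abs_mul]
    exact mul_le_mul_of_nonneg_left (hM t ht) (abs_nonneg c)

def avg (f : ℝ → ℝ) (n : ℕ) (s : Fin n → ℝ) (t : ℝ) : ℝ := (∑ j, f (t + s j)) / n

def pSet (f : ℝ → ℝ) : Set ℝ :=
  {r | ∃ (n : ℕ) (s : Fin n → ℝ), 0 < n ∧ (∀ j, 0 ≤ s j) ∧ r = limsup (avg f n s) atTop}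

def pFun (f : ℝ → ℝ) : ℝ := sInf (pSet f)

variable {f g u : ℝ → ℝ} {M Mf Mg c : ℝ} {n n' : ℕ} {s : Fin n → ℝ} {s' : Fin n' → ℝ}

lemma avg_abs_le (hM : ∀ t ∈ Ici (0:ℝ), |f t| ≤ M) (hn : 0 < n) (hs : ∀ j, 0 ≤ s j) :
    ∀ t ∈ Ici (0:ℝ), |avg f n s t| ≤ M := by
  intro t ht
  rw [mem_Ici] at ht
  have h1 : |∑ j, f (t + s j)| ≤ (n : ℝ) * M := by
    calc |∑ j, f (t + s j)| ≤ ∑ j, |f (t + s j)| := Finset.abs_sum_le_sum_abs _ _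
    _ ≤ ∑ _j : Fin n, M :=
        Finset.sum_le_sum fun j _ => hM _ (mem_Ici.2 (add_nonneg ht (hs j)))
    _ = (n : ℝ) * M := by simp [Finset.sum_const, Finset.card_univ, mul_comm]
  have hn' : (0:ℝ) < n := by exact_mod_cast hn
  rw [avg, abs_div, abs_of_pos hn', div_le_iff₀ hn']
  linarith [h1]

lemma bddAbove_avg (hM : ∀ t ∈ Ici (0:ℝ), |f t| ≤ M) (hn : 0 < n) (hs : ∀ j, 0 ≤ s j) :
    IsBoundedUnder (· ≤ ·) atTop (avg f n s) :=
  isBoundedUnder_of_eventually_le ((eventually_ge_atTop (0:ℝ)).mono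
    fun t ht => (abs_le.1 (avg_abs_le hM hn hs t ht)).2)

lemma bddBelow_avg (hM : ∀ t ∈ Ici (0:ℝ), |f t| ≤ M) (hn : 0 < n) (hs : ∀ j, 0 ≤ s j) :
    IsBoundedUnder (· ≥ ·) atTop (avg f n s) :=
  isBoundedUnder_of_eventually_ge ((eventually_ge_atTop (0:ℝ)).mono
    fun t ht => (abs_le.1 (avg_abs_le hM hn hs t ht)).1)

lemma cobdd_avg (hM : ∀ t ∈ Ici (0:ℝ), |f t| ≤ M) (hn : 0 < n) (hs : ∀ j, 0 ≤ s j) :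
    IsCoboundedUnder (· ≤ ·) atTop (avg f n s) :=
  (bddBelow_avg hM hn hs).isCoboundedUnder_le

lemma limsup_avg_le_M (hM : ∀ t ∈ Ici (0:ℝ), |f t| ≤ M) (hn : 0 < n) (hs : ∀ j, 0 ≤ s j) :
    limsup (avg f n s) atTop ≤ M :=
  limsup_le_of_le (cobdd_avg hM hn hs) ((eventually_ge_atTop (0:ℝ)).mono
    fun t ht => (abs_le.1 (avg_abs_le hM hn hs t ht)).2)

lemma neg_M_le_limsup_avg (hM : ∀ t ∈ Ici (0:ℝ), |f t| ≤ M) (hn : 0 < n) (hs : ∀ j, 0 ≤ s j) :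
    -M ≤ limsup (avg f n s) atTop :=
  le_limsup_of_frequently_le (((eventually_ge_atTop (0:ℝ)).mono
    fun t ht => (abs_le.1 (avg_abs_le hM hn hs t ht)).1).frequently) (bddAbove_avg hM hn hs)

lemma pSet_nonempty (f : ℝ → ℝ) : (pSet f).Nonempty :=
  ⟨_, 1, fun _ => 0, one_pos, fun _ => le_rfl, rfl⟩

lemma bddBelow_pSet (hM : ∀ t ∈ Ici (0:ℝ), |f t| ≤ M) : BddBelow (pSet f) := by
  refine ⟨-M, ?_⟩
  rintro r ⟨n, s, hn, hs, rfl⟩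
  exact neg_M_le_limsup_avg hM hn hs

lemma pFun_le_of_mem (hM : ∀ t ∈ Ici (0:ℝ), |f t| ≤ M) {r : ℝ} (hr : r ∈ pSet f) :
    pFun f ≤ r := csInf_le (bddBelow_pSet hM) hr

lemma le_pFun {c : ℝ} (h : ∀ r ∈ pSet f, c ≤ r) : c ≤ pFun f :=
  le_csInf (pSet_nonempty f) h

/-- averaging over nonnegative shifts does not increase the `limsup` at `+∞`. -/
lemma limsup_avg_le_limsup (hM : ∀ t ∈ Ici (0:ℝ), |u t| ≤ M) (hn : 0 < n)
    (hs : ∀ j, 0 ≤ s j) :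
    limsup (avg u n s) atTop ≤ limsup u atTop := by
  have hb : IsBoundedUnder (· ≤ ·) atTop u :=
    isBoundedUnder_of_eventually_le ((eventually_ge_atTop (0:ℝ)).mono
      fun t ht => (abs_le.1 (hM t ht)).2)
  have hcob : IsCoboundedUnder (· ≤ ·) atTop (avg u n s) := cobdd_avg hM hn hs
  refine le_of_forall_pos_le_add fun ε hε => ?_
  have h2 : ∀ᶠ t in atTop, u t < limsup u atTop + ε :=
    eventually_lt_of_limsup_lt (lt_add_of_pos_right _ hε) hb
  obtain ⟨T, hT⟩ := eventually_atTop.1 h2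
  refine limsup_le_of_le hcob ?_
  filter_upwards [eventually_ge_atTop T] with t ht
  have hj : ∀ j, u (t + s j) ≤ limsup u atTop + ε := fun j =>
    (hT _ (le_trans ht (le_add_of_nonneg_right (hs j)))).le
  have hn' : (0:ℝ) < n := by exact_mod_cast hn
  rw [avg, div_le_iff₀ hn']
  calc (∑ j, u (t + s j)) ≤ ∑ _j : Fin n, (limsup u atTop + ε) :=
        Finset.sum_le_sum fun j _ => hj j
  _ = (limsup u atTop + ε) * n := by
        rw [Finset.sum_const, Finset.card_univ, Fintype.card_fin, nsmul_eq_mul]; ring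

lemma avg_comp (f : ℝ → ℝ) (s : Fin n → ℝ) (s' : Fin n' → ℝ) :
    avg f (n * n') (fun k => s (finProdFinEquiv.symm k).1 + s' (finProdFinEquiv.symm k).2)
      = avg (avg f n s) n' s' := by
  funext t
  unfold avg
  rw [← Equiv.sum_comp finProdFinEquiv
    (fun k => f (t + (s (finProdFinEquiv.symm k).1 + s' (finProdFinEquiv.symm k).2)))]
  simp only [Equiv.symm_apply_apply]
  rw [Fintype.sum_prod_type, Finset.sum_comm]
  have harg : ∀ (j : Fin n') (i : Fin n), t + (s i + s' j) = t + s' j + s i := by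
    intro i j; ring
  simp only [harg]
  push_cast
  simp only [← div_div]
  rw [← Finset.sum_div]



variable {f g u : ℝ → ℝ} {M Mf Mg c : ℝ} {n n' : ℕ} {s : Fin n → ℝ} {s' : Fin n' → ℝ}

lemma avg_comp' (f : ℝ → ℝ) (s : Fin n → ℝ) (s' : Fin n' → ℝ) :
    avg f (n * n') (fun k => s (finProdFinEquiv.symm k).1 + s' (finProdFinEquiv.symm k).2)
      = avg (avg f n' s') n s := by
  funext t
  unfold avg
  rw [← Equiv.sum_comp finProdFinEquiv
    (fun k => f (t + (s (finProdFinEquiv.symm k).1 + s' (finProdFinEquiv.symm k).2)))]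
  simp only [Equiv.symm_apply_apply]
  rw [Fintype.sum_prod_type]
  have harg : ∀ (i : Fin n) (j : Fin n'), t + (s i + s' j) = t + s i + s' j := by
    intro i j; ring
  simp only [harg]
  push_cast
  rw [mul_comm (n:ℝ) (n':ℝ)]
  simp only [← div_div]
  rw [← Finset.sum_div]

-- now new material
lemma pFun_add_le (hf : ∀ t ∈ Ici (0:ℝ), |f t| ≤ Mf) (hg : ∀ t ∈ Ici (0:ℝ), |g t| ≤ Mg) :
    pFun (fun t => f t + g t) ≤ pFun f + pFun g := by
  have hadd : ∀ t ∈ Ici (0:ℝ), |f t + g t| ≤ Mf + Mg := fun t ht =>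
    (abs_add_le _ _).trans (add_le_add (hf t ht) (hg t ht))
  refine le_of_forall_pos_le_add fun ε hε => ?_
  obtain ⟨r₁, hr₁mem, hr₁⟩ := exists_lt_of_csInf_lt (pSet_nonempty f)
    (show pFun f < pFun f + ε/2 by linarith)
  obtain ⟨r₂, hr₂mem, hr₂⟩ := exists_lt_of_csInf_lt (pSet_nonempty g)
    (show pFun g < pFun g + ε/2 by linarith)
  obtain ⟨n, s, hn, hs, rfl⟩ := hr₁mem
  obtain ⟨n', s', hn', hs', rfl⟩ := hr₂mem
  set comb : Fin (n * n') → ℝ :=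
    fun k => s (finProdFinEquiv.symm k).1 + s' (finProdFinEquiv.symm k).2 with hcombdef
  have hcomb : ∀ k, 0 ≤ comb k := fun k => add_nonneg (hs _) (hs' _)
  have hnn' : 0 < n * n' := Nat.mul_pos hn hn'
  have hmem : limsup (avg (fun t => f t + g t) (n*n') comb) atTop ∈ pSet (fun t => f t + g t) :=
    ⟨n*n', comb, hnn', hcomb, rfl⟩
  have hsplit : avg (fun t => f t + g t) (n*n') comb
      = (avg f (n*n') comb) + (avg g (n*n') comb) := by
    funext t
    simp only [avg, Pi.add_apply]
    rw [Finset.sum_add_distrib, add_div]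
  have key : limsup (avg (fun t => f t + g t) (n*n') comb) atTop
      ≤ limsup (avg f n s) atTop + limsup (avg g n' s') atTop := by
    rw [hsplit]
    calc limsup ((avg f (n*n') comb) + (avg g (n*n') comb)) atTop
        ≤ limsup (avg f (n*n') comb) atTop + limsup (avg g (n*n') comb) atTop :=
          limsup_add_le (bddBelow_avg hf hnn' hcomb) (bddAbove_avg hf hnn' hcomb)
            (cobdd_avg hg hnn' hcomb) (bddAbove_avg hg hnn' hcomb)
      _ ≤ limsup (avg f n s) atTop + limsup (avg g n' s') atTop := by
          rw [hcombdef, avg_comp f s s', avg_comp' g s s']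
          exact add_le_add
            (limsup_avg_le_limsup (avg_abs_le hf hn hs) hn' hs')
            (limsup_avg_le_limsup (avg_abs_le hg hn' hs') hn hs)
  have h1 : pFun (fun t => f t + g t) ≤ limsup (avg (fun t => f t + g t) (n*n') comb) atTop :=
    pFun_le_of_mem hadd hmem
  linarith

lemma avg_const (c : ℝ) (hn : 0 < n) (s : Fin n → ℝ) :
    avg (fun _ => c) n s = fun _ => c := by
  funext t
  rw [avg, Finset.sum_const, Finset.card_univ, Fintype.card_fin, nsmul_eq_mul,
    mul_div_cancel_left₀]
  exact_mod_cast hn.ne'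

lemma pFun_const (c : ℝ) : pFun (fun _ => c) = c := by
  have hset : pSet (fun _ => c) = {c} := by
    ext r
    constructor
    · rintro ⟨n, s, hn, hs, rfl⟩
      rw [avg_const c hn s, limsup_const]
      rfl
    · rintro rfl
      refine ⟨1, fun _ => 0, one_pos, fun _ => le_rfl, ?_⟩
      rw [avg_const _ one_pos (fun _ => 0), limsup_const]
  rw [pFun, hset, csInf_singleton]

lemma pFun_zero : pFun (fun _ => (0:ℝ)) = 0 := pFun_const 0

lemma pFun_neg_nonpos (hM : ∀ t ∈ Ici (0:ℝ), |f t| ≤ M) (hpos : ∀ t ∈ Ici (0:ℝ), 0 ≤ f t) :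
    pFun (fun t => -f t) ≤ 0 := by
  have hMneg : ∀ t ∈ Ici (0:ℝ), |(-f t)| ≤ M := by
    intro t ht; rw [abs_neg]; exact hM t ht
  have hmem : limsup (avg (fun t => -f t) 1 (fun _ => 0)) atTop ∈ pSet (fun t => -f t) :=
    ⟨1, fun _ => 0, one_pos, fun _ => le_rfl, rfl⟩
  refine (pFun_le_of_mem hMneg hmem).trans ?_
  refine limsup_le_of_le (cobdd_avg hMneg one_pos fun _ => le_rfl) ?_
  filter_upwards [eventually_ge_atTop (0:ℝ)] with t ht
  have : avg (fun t => -f t) 1 (fun _ => 0) t = -f t := by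
    simp [avg]
  rw [this]
  simpa using hpos t ht

lemma limsup_const_mul_atTop (hc : 0 < c) (hM : ∀ t ∈ Ici (0:ℝ), |u t| ≤ M) :
    limsup (fun t => c * u t) atTop = c * limsup u atTop := by
  have hb : IsBoundedUnder (· ≤ ·) atTop u :=
    isBoundedUnder_of_eventually_le ((eventually_ge_atTop (0:ℝ)).mono
      fun t ht => (abs_le.1 (hM t ht)).2)
  have hcb : IsCoboundedUnder (· ≤ ·) atTop u :=
    (isBoundedUnder_of_eventually_ge ((eventually_ge_atTop (0:ℝ)).mono
      fun t ht => (abs_le.1 (hM t ht)).1)).isCoboundedUnder_le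
  have hb2 : IsBoundedUnder (· ≤ ·) atTop (fun t => c * u t) :=
    isBoundedUnder_of_eventually_le ((eventually_ge_atTop (0:ℝ)).mono
      fun t ht => mul_le_mul_of_nonneg_left ((abs_le.1 (hM t ht)).2) hc.le)
  have hcb2 : IsCoboundedUnder (· ≤ ·) atTop (fun t => c * u t) :=
    (isBoundedUnder_of_eventually_ge ((eventually_ge_atTop (0:ℝ)).mono
      fun t ht => mul_le_mul_of_nonneg_left ((abs_le.1 (hM t ht)).1) hc.le)).isCoboundedUnder_le
  exact ((OrderIso.mulLeft₀ c hc).limsup_apply hb hcb hb2 hcb2).symm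

lemma avg_const_mul (c : ℝ) (f : ℝ → ℝ) (n : ℕ) (s : Fin n → ℝ) :
    avg (fun t => c * f t) n s = fun t => c * avg f n s t := by
  funext t
  rw [avg, avg, ← Finset.mul_sum, mul_div_assoc]

lemma pFun_smul (hM : ∀ t ∈ Ici (0:ℝ), |f t| ≤ M) (hc : 0 < c) :
    pFun (fun t => c * f t) = c * pFun f := by
  have hset : pSet (fun t => c * f t) = (fun r => c * r) '' pSet f := by
    ext r
    constructor
    · rintro ⟨n, s, hn, hs, rfl⟩
      exact ⟨limsup (avg f n s) atTop, ⟨n, s, hn, hs, rfl⟩, by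
        rw [avg_const_mul, limsup_const_mul_atTop hc (avg_abs_le hM hn hs)]⟩
    · rintro ⟨r', ⟨n, s, hn, hs, rfl⟩, rfl⟩
      exact ⟨n, s, hn, hs, by
        rw [avg_const_mul, limsup_const_mul_atTop hc (avg_abs_le hM hn hs)]⟩
  have himg : (fun r => c * r) '' pSet f = c • pSet f := by
    rw [← Set.image_smul]
    simp [smul_eq_mul]
  rw [pFun, pFun, hset, himg, Real.sInf_smul_of_nonneg hc.le, smul_eq_mul]

lemma pFun_shift_sub_nonpos (hM : ∀ t ∈ Ici (0:ℝ), |f t| ≤ M) {a : ℝ} (ha : 0 ≤ a) :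
    pFun (fun t => f (t + a) - f t) ≤ 0 := by
  have hM0 : 0 ≤ M := le_trans (abs_nonneg _) (hM 0 self_mem_Ici)
  refine le_of_forall_pos_le_add fun ε hε => ?_
  obtain ⟨n, hn⟩ := exists_nat_gt (2 * M / ε)
  have hn0 : 0 < n + 1 := Nat.succ_pos n
  set s : Fin (n+1) → ℝ := fun j => (j : ℕ) * a with hsdef
  have hs : ∀ j, 0 ≤ s j := fun j => mul_nonneg (Nat.cast_nonneg _) ha
  have htel : ∀ t : ℝ, avg (fun t => f (t + a) - f t) (n+1) s t
      = (f (t + ((n:ℝ)+1) * a) - f t) / ((n:ℝ)+1) := by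
    intro t
    simp only [avg]
    have hsum : (∑ j : Fin (n+1), (f (t + s j + a) - f (t + s j)))
        = f (t + ((n:ℝ)+1)*a) - f t := by
      rw [hsdef]
      simp only
      rw [Fin.sum_univ_eq_sum_range (fun m : ℕ => f (t + (m:ℝ)*a + a) - f (t + (m:ℝ)*a)) (n+1)]
      have hcg : ∀ m ∈ Finset.range (n+1), f (t + (m:ℝ)*a + a) - f (t + (m:ℝ)*a)
          = (fun m : ℕ => f (t + (m:ℝ)*a)) (m+1) - (fun m : ℕ => f (t + (m:ℝ)*a)) m := by
        intro m _
        simp only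
        congr 2
        push_cast; ring
      rw [Finset.sum_congr rfl hcg, Finset.sum_range_sub (fun m : ℕ => f (t + (m:ℝ)*a))]
      push_cast
      norm_num
    have hbeta : (∑ j : Fin (n+1), (f (t + s j + a) - f (t + s j)))
        = ∑ j : Fin (n+1), ((fun t => f (t + a) - f t) (t + s j)) := by
      refine Finset.sum_congr rfl fun j _ => ?_
      simp only
    rw [← hbeta, hsum]
    push_cast
    ring
  have hMs : ∀ t ∈ Ici (0:ℝ), |f (t + a) - f t| ≤ 2 * M := by
    intro t ht
    calc |f (t + a) - f t| ≤ |f (t+a)| + |f t| := abs_sub _ _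
    _ ≤ M + M := add_le_add (hM _ (mem_Ici.2 (add_nonneg ht ha))) (hM t ht)
    _ = 2 * M := by ring
  have hmem : limsup (avg (fun t => f (t + a) - f t) (n+1) s) atTop
      ∈ pSet (fun t => f (t + a) - f t) := ⟨n+1, s, hn0, hs, rfl⟩
  refine (pFun_le_of_mem hMs hmem).trans ?_
  have hub : limsup (avg (fun t => f (t + a) - f t) (n+1) s) atTop ≤ 2 * M / ((n:ℝ)+1) := by
    refine limsup_le_of_le (cobdd_avg hMs hn0 hs) ?_
    filter_upwards [eventually_ge_atTop (0:ℝ)] with t ht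
    rw [htel t]
    have h1 : |f (t + ((n:ℝ)+1) * a) - f t| ≤ 2 * M := by
      calc |f (t + ((n:ℝ)+1) * a) - f t| ≤ |f (t + ((n:ℝ)+1)*a)| + |f t| := abs_sub _ _
      _ ≤ M + M := add_le_add (hM _ (mem_Ici.2 (add_nonneg ht (by positivity)))) (hM t ht)
      _ = 2 * M := by ring
    have hn1 : (0:ℝ) < (n:ℝ)+1 := by positivity
    rw [div_le_div_iff₀ hn1 hn1]
    have := (abs_le.1 h1).2
    nlinarith
  refine hub.trans ?_
  rw [zero_add, div_le_iff₀ (by positivity : (0:ℝ) < (n:ℝ)+1)]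
  rw [div_lt_iff₀ hε] at hn
  nlinarith



variable {f g u : ℝ → ℝ} {M Mf Mg c : ℝ}

lemma memV (hf : IsCb f) : f ∈ V := hf.2

lemma pFun_neg_abs (hM : ∀ t ∈ Ici (0:ℝ), |f t| ≤ M) : ∀ t ∈ Ici (0:ℝ), |(-f) t| ≤ M := by
  intro t ht
  rw [Pi.neg_apply, abs_neg]
  exact hM t ht

lemma pFun_sum_neg_nonneg (hM : ∀ t ∈ Ici (0:ℝ), |f t| ≤ M) : 0 ≤ pFun f + pFun (-f) := by
  have h0 : (fun t => f t + (-f) t) = fun _ => (0:ℝ) := by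
    funext t; simp
  have := pFun_add_le hM (pFun_neg_abs hM)
  rw [h0, pFun_zero] at this
  linarith

lemma pFun_sub_shift_nonpos (hM : ∀ t ∈ Ici (0:ℝ), |f t| ≤ M) {a : ℝ} (ha : 0 ≤ a) :
    pFun (fun t => f t - f (t + a)) ≤ 0 := by
  have hMneg : ∀ t ∈ Ici (0:ℝ), |(fun t => -f t) t| ≤ M := by
    intro t ht; simp only [abs_neg]; exact hM t ht
  have heq : (fun t => (fun t => -f t) (t + a) - (fun t => -f t) t)
      = fun t => f t - f (t + a) := by
    funext t; simp only; ring
  have := pFun_shift_sub_nonpos hMneg ha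
  rwa [heq] at this

/-- Hahn-Banach extension step. -/
lemma exists_extension (v : ℝ → ℝ) (hv : v ∈ V) :
    ∃ F : V →ₗ[ℝ] ℝ, (∀ w : V, F w ≤ pFun w.1) ∧ F ⟨v, hv⟩ = pFun v := by
  obtain ⟨Mv, hMv⟩ := id hv
  set vV : V := ⟨v, hv⟩ with hvV
  have hspan : ∀ c : ℝ, c • vV = 0 → c • (pFun v) = 0 := by
    intro c hc
    rcases eq_or_ne c 0 with h | h
    · rw [h, zero_smul]
    · have hv0 : vV = 0 := by
        have h2 := congrArg (fun w => c⁻¹ • w) hc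
        simpa [smul_smul, inv_mul_cancel₀ h] using h2
      have hv0' : v = fun _ => (0:ℝ) := by
        have := congrArg Subtype.val hv0
        simp [hvV] at this; exact this
      rw [show pFun v = 0 by rw [hv0']; exact pFun_zero, smul_zero]
  set f0 := LinearPMap.mkSpanSingleton' (R := ℝ) (σ := RingHom.id ℝ) vV (pFun v) hspan with hf0
  have hN_hom : ∀ c : ℝ, 0 < c → ∀ w : V, pFun ((c • w : V) : ℝ → ℝ) = c * pFun w.1 := by
    rintro c hc ⟨w, Mw, hMw⟩
    have : ((c • (⟨w, Mw, hMw⟩ : V) : V) : ℝ → ℝ) = fun t => c * w t := by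
      funext t; simp
    rw [this]
    exact pFun_smul hMw hc
  have hN_add : ∀ w w' : V, pFun ((w + w' : V) : ℝ → ℝ) ≤ pFun w.1 + pFun w'.1 := by
    rintro ⟨w, Mw, hMw⟩ ⟨w', Mw', hMw'⟩
    have : ((⟨w, Mw, hMw⟩ + ⟨w', Mw', hMw'⟩ : V) : ℝ → ℝ) = fun t => w t + w' t := by
      funext t; simp
    rw [this]
    exact pFun_add_le hMw hMw'
  have hf : ∀ w : f0.domain, f0 w ≤ pFun (w.1 : ℝ → ℝ) := by
    rintro ⟨w1, hw1⟩
    obtain ⟨c, rfl⟩ := Submodule.mem_span_singleton.1 hw1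
    have happ : f0 ⟨c • vV, hw1⟩ = c • (pFun v) :=
      LinearPMap.mkSpanSingleton'_apply vV (pFun v) hspan c _
    rw [happ]
    rcases lt_trichotomy c 0 with hc | hc | hc
    · -- c < 0
      have hnegv : ((c • vV : V) : ℝ → ℝ) = fun t => (-c) * (-v t) := by
        funext t
        show c * v t = (-c) * (-(v t))
        ring
      have hMnv : ∀ t ∈ Ici (0:ℝ), |(fun t => -v t) t| ≤ Mv := by
        intro t ht; simp only [abs_neg]; exact hMv t ht
      have : pFun ((c • vV : V) : ℝ → ℝ) = (-c) * pFun (fun t => -v t) := by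
        rw [hnegv]
        exact pFun_smul hMnv (by linarith)
      show c • pFun v ≤ pFun ((c • vV : V) : ℝ → ℝ)
      rw [this, smul_eq_mul]
      have hkey : 0 ≤ pFun v + pFun (-v) := pFun_sum_neg_nonneg hMv
      have hveq : pFun (fun t => -v t) = pFun (-v) := by
        congr 1
      nlinarith [hkey, hveq]
    · subst hc
      show (0:ℝ) • pFun v ≤ pFun (((0:ℝ) • vV : V) : ℝ → ℝ)
      have hz : (((0:ℝ) • vV : V) : ℝ → ℝ) = fun _ => (0:ℝ) := by funext t; simp
      have h0 : pFun (((0:ℝ) • vV : V) : ℝ → ℝ) = 0 := by rw [hz]; exact pFun_zero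
      rw [zero_smul]
      exact h0.ge
    · show c • pFun v ≤ pFun ((c • vV : V) : ℝ → ℝ)
      rw [hN_hom c hc vV, smul_eq_mul]
  obtain ⟨F, hFagree, hFle⟩ := exists_extension_of_le_sublinear f0 (fun w => pFun w.1)
    hN_hom (fun w w' => hN_add w w') hf
  refine ⟨F, hFle, ?_⟩
  have hmem : vV ∈ f0.domain := by
    rw [hf0]
    exact Submodule.mem_span_singleton_self vV
  have h3 := hFagree ⟨vV, hmem⟩
  have h4 : (f0 ⟨vV, hmem⟩ : ℝ) = pFun v :=
    LinearPMap.mkSpanSingleton'_apply_self vV (pFun v) hspan hmem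
  exact h3.trans h4

/-- Build a Banach limit from a dominated functional. -/
def mkBL (F : V →ₗ[ℝ] ℝ) (hF : ∀ w : V, F w ≤ pFun w.1) : BanachLimitR where
  toFun f := if h : f ∈ V then F ⟨f, h⟩ else 0
  map_add f g hf hg := by
    have hfV := memV hf
    have hgV := memV hg
    have hfgV : (fun t => f t + g t) ∈ V := V.add_mem hfV hgV
    show (if h : (fun t => f t + g t) ∈ V then F ⟨fun t => f t + g t, h⟩ else 0)
        = (if h : f ∈ V then F ⟨f, h⟩ else 0) + (if h : g ∈ V then F ⟨g, h⟩ else 0)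
    rw [dif_pos hfV, dif_pos hgV, dif_pos hfgV]
    have : (⟨fun t => f t + g t, hfgV⟩ : V) = ⟨f, hfV⟩ + ⟨g, hgV⟩ := rfl
    rw [this, map_add]
  map_smul c f hf := by
    have hfV := memV hf
    have hcfV : (fun t => c * f t) ∈ V := V.smul_mem c hfV
    show (if h : (fun t => c * f t) ∈ V then F ⟨fun t => c * f t, h⟩ else 0)
        = c * (if h : f ∈ V then F ⟨f, h⟩ else 0)
    rw [dif_pos hfV, dif_pos hcfV]
    have : (⟨fun t => c * f t, hcfV⟩ : V) = c • ⟨f, hfV⟩ := rfl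
    rw [this, _root_.map_smul, smul_eq_mul]
  pos f hf hfpos := by
    have hfV := memV hf
    show 0 ≤ (if h : f ∈ V then F ⟨f, h⟩ else 0)
    rw [dif_pos hfV]
    obtain ⟨M, hM⟩ := hf.2
    have h1 : F (-(⟨f, hfV⟩ : V)) ≤ pFun (fun t => -f t) := by
      have := hF (-(⟨f, hfV⟩ : V))
      have hco : ((-(⟨f, hfV⟩ : V) : V) : ℝ → ℝ) = fun t => -f t := by
        funext t; simp
      rwa [hco] at this
    have h2 : pFun (fun t => -f t) ≤ 0 := pFun_neg_nonpos hM hfpos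
    have h3 : F (-(⟨f, hfV⟩ : V)) = -F ⟨f, hfV⟩ := map_neg F _
    linarith
  map_one := by
    have h1V : (fun _ => (1:ℝ)) ∈ V := ⟨1, fun t _ => by norm_num⟩
    show (if h : (fun _ => (1:ℝ)) ∈ V then F ⟨fun _ => 1, h⟩ else 0) = 1
    rw [dif_pos h1V]
    have hub : F ⟨fun _ => 1, h1V⟩ ≤ 1 := by
      have := hF ⟨fun _ => 1, h1V⟩
      rwa [pFun_const 1] at this
    have hlb : F (-(⟨fun _ => 1, h1V⟩ : V)) ≤ -1 := by
      have := hF (-(⟨fun _ => 1, h1V⟩ : V))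
      have hco : ((-(⟨fun _ => (1:ℝ), h1V⟩ : V) : V) : ℝ → ℝ) = fun _ => (-1 : ℝ) := by
        funext t; simp
      rw [hco, pFun_const (-1)] at this
      exact this
    rw [map_neg] at hlb
    linarith
  shift_inv f hf s hs := by
    have hfV := memV hf
    obtain ⟨M, hM⟩ := hf.2
    have hfsV : (fun t => f (t + s)) ∈ V := by
      refine ⟨M, fun t ht => ?_⟩
      exact hM _ (mem_Ici.2 (add_nonneg (mem_Ici.1 ht) hs))
    show (if h : (fun t => f (t + s)) ∈ V then F ⟨fun t => f (t + s), h⟩ else 0)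
        = (if h : f ∈ V then F ⟨f, h⟩ else 0)
    rw [dif_pos hfV, dif_pos hfsV]
    have h1 : F (⟨fun t => f (t + s), hfsV⟩ - ⟨f, hfV⟩) ≤ pFun (fun t => f (t + s) - f t) := by
      have := hF (⟨fun t => f (t + s), hfsV⟩ - ⟨f, hfV⟩)
      have hco : (((⟨fun t => f (t + s), hfsV⟩ - ⟨f, hfV⟩ : V) : V) : ℝ → ℝ)
          = fun t => f (t + s) - f t := by
        funext t; simp
      rwa [hco] at this
    have h2 : F (⟨f, hfV⟩ - ⟨fun t => f (t + s), hfsV⟩) ≤ pFun (fun t => f t - f (t + s)) := by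
      have := hF (⟨f, hfV⟩ - ⟨fun t => f (t + s), hfsV⟩)
      have hco : (((⟨f, hfV⟩ - ⟨fun t => f (t + s), hfsV⟩ : V) : V) : ℝ → ℝ)
          = fun t => f t - f (t + s) := by
        funext t; simp
      rwa [hco] at this
    rw [map_sub] at h1 h2
    have h3 := pFun_shift_sub_nonpos hM hs
    have h4 := pFun_sub_shift_nonpos hM hs
    linarith

lemma mkBL_apply (F : V →ₗ[ℝ] ℝ) (hF : ∀ w : V, F w ≤ pFun w.1) (f : ℝ → ℝ) (hf : f ∈ V) :
    (mkBL F hF).toFun f = F ⟨f, hf⟩ := dif_pos hf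



variable {ψ κ x : ℝ → ℝ}

/-! ### decreasing rearrangement -/

def dSet (x : ℝ → ℝ) (t : ℝ) : Set ℝ :=
  {s : ℝ | 0 ≤ s ∧ volume {u : ℝ | 0 ≤ u ∧ s < |x u|} ≤ ENNReal.ofReal t}

lemma decRearr_eq (x : ℝ → ℝ) (t : ℝ) : decRearr x t = sInf (dSet x t) := rfl

lemma dSet_mono {t t' : ℝ} (h : t ≤ t') : dSet x t ⊆ dSet x t' := fun s hs =>
  ⟨hs.1, hs.2.trans (ENNReal.ofReal_le_ofReal h)⟩

lemma dSet_bddBelow (t : ℝ) : BddBelow (dSet x t) := ⟨0, fun s hs => hs.1⟩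

lemma decRearr_nonneg (x : ℝ → ℝ) (t : ℝ) : 0 ≤ decRearr x t :=
  Real.sInf_nonneg fun _ hs => hs.1

lemma decRearr_antitoneOn {c : ℝ} (hc : (dSet x c).Nonempty) :
    AntitoneOn (decRearr x) (Ici c) := by
  intro a ha b hb hab
  exact csInf_le_csInf (dSet_bddBelow b) (hc.mono (dSet_mono (mem_Ici.1 ha)))
    (dSet_mono hab)

lemma decRearr_zero_of_empty {t : ℝ} (h : ¬ (dSet x t).Nonempty) : decRearr x t = 0 := by
  rw [decRearr_eq, not_nonempty_iff_eq_empty.1 h, Real.sInf_empty]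

/-- key integrability lemma: if `decRearr x` is integrable on `[0,a]` but not on `[0,b]`
    (with `0 ≤ a ≤ b`), then it vanishes on `[0,a]`. -/
lemma J_eq_zero_aux {a b : ℝ} (ha : 0 ≤ a) (hab : a ≤ b)
    (hb : ¬ IntervalIntegrable (decRearr x) volume 0 b) :
    ∫ s in (0:ℝ)..a, decRearr x s = 0 := by
  by_cases hIa : IntervalIntegrable (decRearr x) volume 0 a
  · have hnab : ¬ IntervalIntegrable (decRearr x) volume a b := fun h => hb (hIa.trans h)
    have hzero : ∀ c ∈ Icc (0:ℝ) a, decRearr x c = 0 := by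
      intro c hcmem
      by_contra hne
      have hcne : (dSet x c).Nonempty := by
        by_contra hemp
        exact hne (decRearr_zero_of_empty hemp)
      have hanti : AntitoneOn (decRearr x) (uIcc a b) := by
        have : uIcc a b ⊆ Ici c := by
          rw [uIcc_of_le hab]
          exact fun y hy => le_trans hcmem.2 hy.1
        exact (decRearr_antitoneOn hcne).mono this
      exact hnab hanti.intervalIntegrable
    have : EqOn (decRearr x) (fun _ => (0:ℝ)) (uIcc 0 a) := by
      intro c hc
      rw [uIcc_of_le ha] at hc
      exact hzero c hc
    rw [intervalIntegral.integral_congr this]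
    simp
  · exact intervalIntegral.integral_undef hIa

lemma J_mono {a b : ℝ} (ha : 0 ≤ a) (hab : a ≤ b) :
    ∫ s in (0:ℝ)..a, decRearr x s ≤ ∫ s in (0:ℝ)..b, decRearr x s := by
  by_cases hIb : IntervalIntegrable (decRearr x) volume 0 b
  · have hIa : IntervalIntegrable (decRearr x) volume 0 a :=
      hIb.mono_set (by rw [uIcc_of_le ha, uIcc_of_le (ha.trans hab)]; exact Icc_subset_Icc le_rfl hab)
    have hIab : IntervalIntegrable (decRearr x) volume a b :=
      hIb.mono_set (by rw [uIcc_of_le hab, uIcc_of_le (ha.trans hab)]; exact Icc_subset_Icc ha le_rfl)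
    have := intervalIntegral.integral_add_adjacent_intervals hIa hIab
    have hnn : 0 ≤ ∫ s in a..b, decRearr x s :=
      intervalIntegral.integral_nonneg hab (fun u _ => decRearr_nonneg x u)
    linarith
  · rw [intervalIntegral.integral_undef hIb, J_eq_zero_aux ha hab hIb]

lemma decRearr_const_nonpos {t : ℝ} (ht : t ≤ 0) : decRearr x t = decRearr x 0 := by
  rw [decRearr_eq, decRearr_eq]
  congr 1
  unfold dSet
  rw [ENNReal.ofReal_of_nonpos ht, ENNReal.ofReal_zero]

lemma J_dichotomy (x : ℝ → ℝ) :
    (∀ a b : ℝ, IntervalIntegrable (decRearr x) volume a b) ∨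
      (∀ t : ℝ, 0 ≤ t → ∫ s in (0:ℝ)..t, decRearr x s = 0) := by
  by_cases H : ∀ b : ℝ, 0 ≤ b → IntervalIntegrable (decRearr x) volume 0 b
  · left
    -- first: any interval within Iic 0 (constant there)
    have hneg : ∀ a : ℝ, a ≤ 0 → IntervalIntegrable (decRearr x) volume a 0 := by
      intro a hla
      have : AntitoneOn (decRearr x) (uIcc a 0) := by
        intro u hu v hv huv
        rw [uIcc_of_le hla, mem_Icc] at hu hv
        rw [decRearr_const_nonpos hu.2, decRearr_const_nonpos hv.2]
      exact this.intervalIntegrable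
    have key : ∀ a b : ℝ, a ≤ b → IntervalIntegrable (decRearr x) volume a b := by
      intro a b hab
      rcases le_or_gt 0 a with h0a | h0a
      · exact (H b (h0a.trans hab)).mono_set
          (by rw [uIcc_of_le hab, uIcc_of_le (h0a.trans hab)]; exact Icc_subset_Icc h0a le_rfl)
      rcases le_or_gt b 0 with hb0 | hb0
      · exact (hneg a h0a.le).mono_set
          (by rw [uIcc_of_le hab, uIcc_of_le h0a.le]; exact Icc_subset_Icc le_rfl hb0)
      · exact (hneg a h0a.le).trans (H b hb0.le)
    intro a b
    rcases le_total a b with h | h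
    · exact key a b h
    · exact (key b a h).symm
  · right
    push_neg at H
    obtain ⟨b₀, hb₀, hbn⟩ := H
    intro t ht
    rcases le_total t b₀ with h | h
    · exact J_eq_zero_aux ht h hbn
    · refine intervalIntegral.integral_undef fun hI => hbn ?_
      exact hI.mono_set (by rw [uIcc_of_le hb₀, uIcc_of_le ht]; exact Icc_subset_Icc le_rfl h)

/-! ### ψ facts -/

lemma psi_mono (hψ : OmegaInf ψ) : MonotoneOn ψ (Ici 0) := by
  rintro a ha b hb hab
  rcases eq_or_lt_of_le hab with rfl | hab'
  · exact le_rfl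
  refine le_of_forall_pos_le_add fun ε hε => ?_
  rcases le_or_gt (ψ a) ε with h | h
  · have := hψ.2.1 b hb
    linarith
  have ha' := mem_Ici.1 ha
  set T : ℝ := a + (b - a) * ψ a / ε with hT
  have hTsub : T - a = (b - a) * ψ a / ε := by rw [hT]; ring
  have hpos : 0 < (b - a) * ψ a / ε := div_pos (mul_pos (by linarith) (by linarith)) hε
  have hTa : a < T := by rw [hT]; linarith
  have hT0 : T ∈ Ici (0:ℝ) := mem_Ici.2 (by linarith)
  set lam : ℝ := (b - a) / (T - a) with hlam
  have hTane : T - a ≠ 0 := by linarith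
  have hl0 : 0 < lam := div_pos (by linarith) (by linarith)
  have hlam_mul : lam * ψ a = ε := by
    rw [hlam, div_mul_eq_mul_div, div_eq_iff hTane, hTsub]
    field_simp
  have hl1 : lam < 1 := by
    nlinarith
  have hcomb := hψ.1.2 ha hT0 (by linarith : (0:ℝ) ≤ 1 - lam) hl0.le (by ring)
  have hpoint : (1 - lam) • a + lam • T = b := by
    rw [smul_eq_mul, smul_eq_mul]
    have hTane : T - a ≠ 0 := by linarith
    have : lam * (T - a) = b - a := by
      rw [hlam]
      field_simp
    nlinarith [this]
  rw [hpoint] at hcomb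
  have hψT : 0 ≤ ψ T := hψ.2.1 T hT0
  rw [smul_eq_mul, smul_eq_mul] at hcomb
  nlinarith

lemma psi_pos (hψ : OmegaInf ψ) {t : ℝ} (ht : 0 < t) : 0 < ψ t := by
  obtain ⟨T, hT1, hT0⟩ := ((hψ.2.2.2.eventually_ge_atTop 1).and (eventually_ge_atTop (0:ℝ))).exists
  rcases le_or_gt T t with h | h
  · have := psi_mono hψ (mem_Ici.2 hT0) (mem_Ici.2 (hT0.trans h)) h
    linarith
  · set lam : ℝ := t / T with hlam
    have hTpos : 0 < T := lt_trans ht h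
    have hl0 : 0 < lam := div_pos ht hTpos
    have hl1 : lam ≤ 1 := by rw [hlam, div_le_one hTpos]; linarith
    have hcomb := hψ.1.2 (self_mem_Ici (a := (0:ℝ))) (mem_Ici.2 hTpos.le)
      (by linarith : (0:ℝ) ≤ 1 - lam) hl0.le (by ring)
    have hpoint : (1 - lam) • (0:ℝ) + lam • T = t := by
      rw [smul_eq_mul, smul_eq_mul, hlam]
      field_simp
      ring
    rw [hpoint] at hcomb
    have h0 : 0 ≤ ψ 0 := hψ.2.1 0 self_mem_Ici
    rw [smul_eq_mul, smul_eq_mul] at hcomb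
    nlinarith

lemma psi_cont (hψ : OmegaInf ψ) : ContinuousOn ψ (Ioi 0) :=
  (hψ.1.subset Ioi_subset_Ici_self (convex_Ioi 0)).continuousOn isOpen_Ioi

/-! ### κ facts -/

lemma kappa_mono (hκ : MemK κ) : MonotoneOn κ (Ici 0) := hκ.1.monotoneOn

lemma kappa_pos (hκ : MemK κ) {t : ℝ} (ht : 0 < t) : 0 < κ t := by
  have := hκ.1 self_mem_Ici (mem_Ici.2 ht.le) ht
  rwa [hκ.2.1] at this

lemma kappa_cont (hκ : MemK κ) : ContinuousOn κ (Ici 0) :=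
  hκ.2.2.2.2.1.continuousOn

/-! ### phiW facts -/

lemma phiW_nonneg (hψ : OmegaInf ψ) (x : ℝ → ℝ) {t : ℝ} (ht : 0 ≤ t) : 0 ≤ phiW ψ x t :=
  div_nonneg (intervalIntegral.integral_nonneg ht fun u _ => decRearr_nonneg x u)
    (hψ.2.1 t ht)

lemma phiW_bound (hψ : OmegaInf ψ) (hx : MemM ψ x) :
    ∃ M : ℝ, 0 ≤ M ∧ ∀ t > (0:ℝ), |phiW ψ x t| ≤ M := by
  obtain ⟨M, hM⟩ := hx.2
  exact ⟨max M 0, le_max_right _ _, fun t ht => abs_le.2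
    ⟨by have := phiW_nonneg hψ x ht.le; linarith [neg_nonpos.2 (le_max_right M 0)],
      (hM t ht).trans (le_max_left _ _)⟩⟩

lemma phiW_ge (hψ : OmegaInf ψ) {c w : ℝ} (hc : 0 < c) (hcw : c ≤ w) :
    phiW ψ x c * (ψ c / ψ w) ≤ phiW ψ x w := by
  have hψc := psi_pos hψ hc
  have hψw := psi_pos hψ (hc.trans_le hcw)
  have hJ : ∫ s in (0:ℝ)..c, decRearr x s ≤ ∫ s in (0:ℝ)..w, decRearr x s := J_mono hc.le hcw
  have h1 : phiW ψ x c * (ψ c / ψ w) = (∫ s in (0:ℝ)..c, decRearr x s) / ψ w := by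
    rw [phiW]
    field_simp
  rw [h1, phiW]
  exact (div_le_div_iff_of_pos_right hψw).2 hJ

lemma phiW_ge2 (hψ : OmegaInf ψ) {c w b : ℝ} (hc : 0 < c) (hcw : c ≤ w) (hψwb : ψ w ≤ ψ b) :
    phiW ψ x c * (ψ c / ψ b) ≤ phiW ψ x w := by
  refine le_trans ?_ (phiW_ge hψ hc hcw)
  have hgc : 0 ≤ phiW ψ x c := phiW_nonneg hψ x hc.le
  have hψc : 0 < ψ c := psi_pos hψ hc
  have hψw : 0 < ψ w := psi_pos hψ (hc.trans_le hcw)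
  rw [← mul_div_assoc, ← mul_div_assoc]
  exact div_le_div_of_nonneg_left (mul_nonneg hgc hψc.le) hψw hψwb


variable {ψ κ x : ℝ → ℝ}

lemma exists_nat_kappa (hκ : MemK κ) {u : ℝ} (hu : 0 ≤ u) :
    ∃ n : ℕ, κ (n:ℝ) ≤ u ∧ u < κ ((n:ℝ)+1) := by
  have hex : ∃ m : ℕ, u < κ ((m:ℝ)+1) := by
    obtain ⟨T, hTu, hT0⟩ := ((hκ.2.2.2.2.2.eventually_gt_atTop u).and
      (eventually_ge_atTop (0:ℝ))).exists
    refine ⟨⌈T⌉₊, lt_of_lt_of_le hTu ?_⟩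
    refine kappa_mono hκ (mem_Ici.2 hT0) (mem_Ici.2 (by positivity)) ?_
    have := Nat.le_ceil T
    linarith
  refine ⟨Nat.find hex, ?_, Nat.find_spec hex⟩
  rcases Nat.eq_zero_or_pos (Nat.find hex) with h0 | hpos
  · rw [h0]
    push_cast
    rwa [hκ.2.1]
  · have hmin := Nat.find_min hex (Nat.sub_lt hpos one_pos)
    push_neg at hmin
    have : ((Nat.find hex - 1 : ℕ) : ℝ) + 1 = (Nat.find hex : ℝ) := by
      have h1 : 1 ≤ Nat.find hex := hpos
      push_cast [Nat.cast_sub h1]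
      ring
    rwa [this] at hmin

lemma chain (hψ : OmegaInf ψ) (hκ : MemK κ) {δ : ℝ} (hδ1 : δ ≤ 1) {N : ℕ}
    (hN : ∀ m : ℕ, N ≤ m → 1 - δ ≤ ψ (κ (m:ℝ)) / ψ (κ ((m:ℝ)+1)))
    {n : ℕ} (hn : N ≤ n) (hn1 : 1 ≤ n) :
    ∀ j : ℕ, phiW ψ x (κ (n:ℝ)) * (1-δ)^j ≤ phiW ψ x (κ ((n:ℝ)+(j:ℝ))) := by
  intro j
  induction j with
  | zero => simp
  | succ j ih =>
    have hm : N ≤ n + j := le_trans hn (Nat.le_add_right n j)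
    have hargpos : (0:ℝ) < (n:ℝ) + (j:ℝ) := by
      have : (1:ℝ) ≤ (n:ℝ) := by exact_mod_cast hn1
      positivity
    have hκpos : 0 < κ ((n:ℝ)+(j:ℝ)) := kappa_pos hκ hargpos
    have hmemr : ((n:ℝ)+(j:ℝ)) ∈ Ici (0:ℝ) := mem_Ici.2 hargpos.le
    have hmemr1 : ((n:ℝ)+(j:ℝ)+1) ∈ Ici (0:ℝ) := mem_Ici.2 (by linarith)
    have hr : 1 - δ ≤ ψ (κ ((n:ℝ)+(j:ℝ))) / ψ (κ ((n:ℝ)+(j:ℝ)+1)) := by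
      have := hN (n+j) hm
      push_cast at this
      exact this
    have hg0 : 0 ≤ phiW ψ x (κ ((n:ℝ)+(j:ℝ))) :=
      phiW_nonneg hψ x hκpos.le
    have hstep : phiW ψ x (κ ((n:ℝ)+(j:ℝ))) *
        (ψ (κ ((n:ℝ)+(j:ℝ))) / ψ (κ ((n:ℝ)+(j:ℝ)+1)))
          ≤ phiW ψ x (κ ((n:ℝ)+(j:ℝ)+1)) :=
      phiW_ge hψ hκpos (kappa_mono hκ hmemr hmemr1 (by linarith))
    have hfin : phiW ψ x (κ (n:ℝ)) * (1-δ)^(j+1) ≤ phiW ψ x (κ ((n:ℝ)+(j:ℝ)+1)) := by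
      calc phiW ψ x (κ (n:ℝ)) * (1-δ)^(j+1)
          = (phiW ψ x (κ (n:ℝ)) * (1-δ)^j) * (1-δ) := by ring
        _ ≤ phiW ψ x (κ ((n:ℝ)+(j:ℝ))) * (1-δ) :=
            mul_le_mul_of_nonneg_right ih (by linarith)
        _ ≤ phiW ψ x (κ ((n:ℝ)+(j:ℝ))) *
              (ψ (κ ((n:ℝ)+(j:ℝ))) / ψ (κ ((n:ℝ)+(j:ℝ)+1))) :=
            mul_le_mul_of_nonneg_left hr hg0
        _ ≤ phiW ψ x (κ ((n:ℝ)+(j:ℝ)+1)) := hstep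
    have hcast : ((n:ℝ)+((j+1:ℕ):ℝ)) = (n:ℝ)+(j:ℝ)+1 := by push_cast; ring
    rwa [hcast]

lemma freq_high (hψ : OmegaInf ψ) (hκ : MemK κ) (hx : MemM ψ x)
    (h1 : Tendsto (fun n : ℕ => ψ (κ (n:ℝ)) / ψ (κ ((n:ℝ) + 1))) atTop (nhds 1))
    {S ε : ℝ} (hS : 0 ≤ S) (hε : 0 < ε) (T₀ : ℝ) :
    ∃ t : ℝ, T₀ ≤ t ∧ 1 ≤ t ∧ ∀ w ∈ Icc t (t + S),
      limsup (phiW ψ x) atTop - ε ≤ phiW ψ x (κ w) := by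
  obtain ⟨M, hM0, hM⟩ := phiW_bound hψ hx
  set α := limsup (phiW ψ x) atTop with hα
  clear_value α
  have hbddA : IsBoundedUnder (· ≤ ·) atTop (phiW ψ x) :=
    isBoundedUnder_of_eventually_le ((eventually_gt_atTop (0:ℝ)).mono
      fun t ht => (abs_le.1 (hM t ht)).2)
  have hcobA : IsCoboundedUnder (· ≤ ·) atTop (phiW ψ x) :=
    (isBoundedUnder_of_eventually_ge ((eventually_gt_atTop (0:ℝ)).mono
      fun t ht => (abs_le.1 (hM t ht)).1)).isCoboundedUnder_le
  have hα0 : 0 ≤ α := by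
    rw [hα]
    exact le_limsup_of_frequently_le (((eventually_gt_atTop (0:ℝ)).mono
      fun t ht => phiW_nonneg hψ x ht.le).frequently) hbddA
  rcases le_or_gt α ε with hcase | hcase
  · refine ⟨max T₀ 1, le_max_left _ _, le_max_right _ _, fun w hw => ?_⟩
    have hw1 : (1:ℝ) ≤ w := le_trans (le_max_right T₀ 1) hw.1
    have hκw : 0 < κ w := kappa_pos hκ (by linarith)
    have := phiW_nonneg hψ x hκw.le
    linarith
  · set K : ℕ := ⌈S⌉₊ with hK
    have hSK : S ≤ (K:ℝ) := Nat.le_ceil S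
    have hK2 : (0:ℝ) < (K:ℝ) + 2 := by positivity
    set δ : ℝ := min (1/2) (ε / (2 * ((K:ℝ)+2) * (α+1))) with hδ
    have hδ0 : 0 < δ := lt_min one_half_pos (div_pos (by linarith) (by positivity))
    have hδhalf : δ ≤ 1/2 := min_le_left _ _
    have hδ2 : δ ≤ ε / (2 * ((K:ℝ)+2) * (α+1)) := min_le_right _ _
    clear_value δ
    have hev : ∀ᶠ m : ℕ in atTop, 1 - δ ≤ ψ (κ (m:ℝ)) / ψ (κ ((m:ℝ)+1)) :=
      h1.eventually (eventually_ge_nhds (by linarith : 1 - δ < 1))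
    obtain ⟨N, hN⟩ := eventually_atTop.1 hev
    have hfreq : ∃ᶠ v in atTop, α - ε/2 < phiW ψ x v :=
      frequently_lt_of_lt_limsup hcobA (by linarith)
    obtain ⟨u, hu1, hu2⟩ := (hfreq.and_eventually (eventually_ge_atTop
      (max (κ ((N:ℝ)+1)) (κ (max T₀ 0 + 1))))).exists
    have hκN1 : 0 < κ ((N:ℝ)+1) := kappa_pos hκ (by positivity)
    have hu0 : 0 < u := lt_of_lt_of_le hκN1 (le_trans (le_max_left _ _) hu2)
    obtain ⟨n, hnl, hnr⟩ := exists_nat_kappa hκ hu0.le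
    have hNn : (N:ℝ) + 1 < (n:ℝ) + 1 := by
      by_contra hcon
      push_neg at hcon
      have := kappa_mono hκ (mem_Ici.2 (by positivity : (0:ℝ) ≤ (n:ℝ)+1))
        (mem_Ici.2 (by positivity)) hcon
      have h2 := le_trans (le_max_left (κ ((N:ℝ)+1)) (κ (max T₀ 0 + 1))) hu2
      linarith
    have hT₀n : max T₀ 0 + 1 < (n:ℝ) + 1 := by
      by_contra hcon
      push_neg at hcon
      have := kappa_mono hκ (mem_Ici.2 (by positivity : (0:ℝ) ≤ (n:ℝ)+1))
        (mem_Ici.2 (by positivity : (0:ℝ) ≤ max T₀ 0 + 1)) hcon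
      have h2 := le_trans (le_max_right (κ ((N:ℝ)+1)) (κ (max T₀ 0 + 1))) hu2
      linarith
    have hNnn : N ≤ n := by exact_mod_cast (by linarith : (N:ℝ) ≤ (n:ℝ))
    have hNn1 : N ≤ n + 1 := le_trans hNnn (Nat.le_succ n)
    have h1n : 1 ≤ n + 1 := Nat.succ_le_succ (Nat.zero_le n)
    -- step to κ(n+1)
    have hκn1mem : ((n:ℝ)+1) ∈ Ici (0:ℝ) := mem_Ici.2 (by positivity)
    have hgn1 : (α - ε/2) * (1 - δ) ≤ phiW ψ x (κ ((n:ℝ)+1)) := by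
      have hucw : u ≤ κ ((n:ℝ)+1) := hnr.le
      have h2 := phiW_ge2 (x := x) hψ hu0 hucw (le_refl (ψ (κ ((n:ℝ)+1))))
      have hκnmem : (n:ℝ) ∈ Ici (0:ℝ) := mem_Ici.2 (Nat.cast_nonneg n)
      have hκn0 : (0:ℝ) ≤ κ (n:ℝ) := hκ.2.2.1 hκnmem
      have hψmono : ψ (κ (n:ℝ)) ≤ ψ u :=
        psi_mono hψ (mem_Ici.2 hκn0) (mem_Ici.2 hu0.le) hnl
      have hψn1pos : 0 < ψ (κ ((n:ℝ)+1)) := psi_pos hψ (kappa_pos hκ (by positivity))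
      have hratio : 1 - δ ≤ ψ u / ψ (κ ((n:ℝ)+1)) := by
        refine le_trans (hN n hNnn) ?_
        exact (div_le_div_iff_of_pos_right hψn1pos).2 hψmono
      have hgu0 : 0 ≤ phiW ψ x u := phiW_nonneg hψ x hu0.le
      have hh : (α - ε/2) * (1 - δ) ≤ phiW ψ x u * (ψ u / ψ (κ ((n:ℝ)+1))) := by
        have hge : α - ε/2 ≤ phiW ψ x u := hu1.le
        have h1δ : 0 ≤ 1 - δ := by linarith
        have hr0 : 0 ≤ ψ u / ψ (κ ((n:ℝ)+1)) := le_trans h1δ hratio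
        nlinarith
      exact le_trans hh h2
    refine ⟨(n:ℝ)+1, by linarith [le_max_left T₀ (0:ℝ)], by
      have := Nat.cast_nonneg (α := ℝ) n; linarith, fun w hw => ?_⟩
    -- now the estimate at w
    set m : ℕ := ⌊w⌋₊ with hm
    have hw1 : (n:ℝ)+1 ≤ w := hw.1
    have hw0 : (0:ℝ) ≤ w := by linarith [Nat.cast_nonneg (α := ℝ) n]
    have hmw : (m:ℝ) ≤ w := Nat.floor_le hw0
    have hwm1 : w ≤ (m:ℝ)+1 := (Nat.lt_floor_add_one w).le
    have hn1m : n + 1 ≤ m := by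
      rw [hm]
      exact Nat.le_floor (by push_cast; linarith)
    have hmn1r : (n:ℝ) + 1 ≤ (m:ℝ) := by exact_mod_cast hn1m
    obtain ⟨j, hj⟩ : ∃ j : ℕ, m = (n+1) + j := ⟨m - (n+1), by omega⟩
    have hjK : j ≤ K := by
      have hwK : w ≤ (n:ℝ)+1+(K:ℝ) := by linarith [hw.2, hSK]
      have h2 : ((n+1+j : ℕ):ℝ) ≤ (n:ℝ)+1+(K:ℝ) := by
        rw [← hj]; push_cast; linarith
      have h3 : (j:ℝ) ≤ (K:ℝ) := by push_cast at h2; linarith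
      exact_mod_cast h3
    have hchain := chain (x := x) hψ hκ (by linarith : δ ≤ 1) hN hNn1 h1n j
    have hcast2 : (((n+1:ℕ)):ℝ) + (j:ℝ) = (m:ℝ) := by rw [hj]; push_cast; ring
    have hcast1 : (((n+1:ℕ)):ℝ) = (n:ℝ)+1 := by push_cast; ring
    rw [hcast2, hcast1] at hchain
    have hmpos : (0:ℝ) < (m:ℝ) := by linarith
    have hκm : 0 < κ (m:ℝ) := kappa_pos hκ hmpos
    have hκmw : κ (m:ℝ) ≤ κ w := kappa_mono hκ (mem_Ici.2 hmpos.le) (mem_Ici.2 hw0) hmw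
    have hψw : ψ (κ w) ≤ ψ (κ ((m:ℝ)+1)) := by
      have hh1 : κ w ≤ κ ((m:ℝ)+1) :=
        kappa_mono hκ (mem_Ici.2 hw0) (mem_Ici.2 (by positivity)) hwm1
      exact psi_mono hψ (hκ.2.2.1 (mem_Ici.2 hw0))
        (hκ.2.2.1 (mem_Ici.2 (by positivity))) hh1
    have hstepw := phiW_ge2 (x := x) hψ hκm hκmw hψw
    have hrm : 1 - δ ≤ ψ (κ (m:ℝ)) / ψ (κ ((m:ℝ)+1)) := hN m (by omega)
    have hgm0 : 0 ≤ phiW ψ x (κ (m:ℝ)) :=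
      phiW_nonneg hψ x (mem_Ici.1 (hκ.2.2.1 (mem_Ici.2 hmpos.le)))
    have hfinal : phiW ψ x (κ (m:ℝ)) * (1-δ) ≤ phiW ψ x (κ w) :=
      le_trans (mul_le_mul_of_nonneg_left hrm hgm0) hstepw
    have h1δ0 : (0:ℝ) ≤ 1 - δ := by linarith
    have hcomb1 : (α - ε/2) * (1-δ)^(j+2) ≤ phiW ψ x (κ w) := by
      calc (α - ε/2) * (1-δ)^(j+2) = (((α - ε/2)*(1-δ)) * (1-δ)^j) * (1-δ) := by ring
      _ ≤ (phiW ψ x (κ ((n:ℝ)+1)) * (1-δ)^j) * (1-δ) :=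
          mul_le_mul_of_nonneg_right
            (mul_le_mul_of_nonneg_right hgn1 (pow_nonneg h1δ0 j)) h1δ0
      _ ≤ phiW ψ x (κ (m:ℝ)) * (1-δ) := mul_le_mul_of_nonneg_right hchain h1δ0
      _ ≤ phiW ψ x (κ w) := hfinal
    have hpow : (1-δ)^(K+2) ≤ (1-δ)^(j+2) :=
      pow_le_pow_of_le_one h1δ0 (by linarith) (by omega)
    have hαε2 : 0 ≤ α - ε/2 := by linarith
    have hcomb2 : (α - ε/2) * (1-δ)^(K+2) ≤ phiW ψ x (κ w) :=
      le_trans (mul_le_mul_of_nonneg_left hpow hαε2) hcomb1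
    have hbern : 1 - ((K:ℝ)+2)*δ ≤ (1-δ)^(K+2) := by
      have hb := one_add_mul_le_pow (a := -δ) (by linarith) (K+2)
      calc 1 - ((K:ℝ)+2)*δ = 1 + ((K+2:ℕ):ℝ)*(-δ) := by push_cast; ring
      _ ≤ (1 + -δ)^(K+2) := hb
      _ = (1-δ)^(K+2) := by ring_nf
    have hδK : ((K:ℝ)+2)*δ ≤ ε/(2*(α+1)) := by
      calc ((K:ℝ)+2)*δ ≤ ((K:ℝ)+2)*(ε / (2 * ((K:ℝ)+2) * (α+1))) :=
            mul_le_mul_of_nonneg_left hδ2 hK2.le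
      _ = ε/(2*(α+1)) := by
          field_simp
    have hα1 : (0:ℝ) < α + 1 := by linarith
    have hnum : α - ε ≤ (α - ε/2) * (1-δ)^(K+2) := by
      have hh1 : (α - ε/2)*(1 - ((K:ℝ)+2)*δ) ≤ (α - ε/2)*(1-δ)^(K+2) :=
        mul_le_mul_of_nonneg_left hbern hαε2
      have hKδ0 : 0 ≤ ((K:ℝ)+2)*δ := mul_nonneg hK2.le hδ0.le
      have hh2 : (α - ε/2)*(((K:ℝ)+2)*δ) ≤ (α+1)*(ε/(2*(α+1))) :=
        le_trans (mul_le_mul_of_nonneg_right (by linarith : α - ε/2 ≤ α+1) hKδ0)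
          (mul_le_mul_of_nonneg_left hδK (by linarith : (0:ℝ) ≤ α+1))
      have hh3 : (α+1)*(ε/(2*(α+1))) = ε/2 := by
        field_simp
      have hh4 : (α - ε/2) - (α - ε/2)*(((K:ℝ)+2)*δ)
          = (α - ε/2)*(1 - ((K:ℝ)+2)*δ) := by ring
      linarith [hh1, hh2, hh3, hh4]
    linarith [hcomb2, hnum]


variable {ψ κ x : ℝ → ℝ}

-- axioms standing for already-proven lemmas
/-! ### continuity of h₀ -/

lemma h0_IsCb (hψ : OmegaInf ψ) (hκ : MemK κ) (hx : MemM ψ x) :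
    IsCb (fun t => phiW ψ x (κ (max t 1))) := by
  obtain ⟨M, hM0, hM⟩ := phiW_bound hψ hx
  have hκ1 : 0 < κ 1 := kappa_pos hκ one_pos
  have hκmax : ∀ t : ℝ, 0 < κ (max t 1) := fun t =>
    kappa_pos hκ (lt_of_lt_of_le one_pos (le_max_right t 1))
  refine ⟨?_, M, fun t _ => hM _ (hκmax t)⟩
  rcases J_dichotomy x with hgood | hdeg
  · -- good case : the primitive is continuous
    have hJ : Continuous fun b : ℝ => ∫ s in (0:ℝ)..b, decRearr x s :=
      intervalIntegral.continuous_primitive hgood 0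
    have hg : ContinuousOn (phiW ψ x) (Ioi 0) := by
      apply ContinuousOn.div hJ.continuousOn (psi_cont hψ)
      exact fun t ht => (psi_pos hψ ht).ne'
    have hinner : Continuous fun t : ℝ => max t 1 := continuous_id.max continuous_const
    have hκc : ContinuousOn (fun t : ℝ => κ (max t 1)) univ :=
      (kappa_cont hκ).comp hinner.continuousOn
        (fun t _ => mem_Ici.2 (le_trans zero_le_one (le_max_right t 1)))
    have hcomp : ContinuousOn (fun t : ℝ => phiW ψ x (κ (max t 1))) univ :=
      hg.comp hκc (fun t _ => mem_Ioi.2 (hκmax t))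
    exact hcomp.mono (subset_univ _)
  · -- degenerate case : h₀ ≡ 0
    have h0 : (fun t : ℝ => phiW ψ x (κ (max t 1))) = fun _ => (0:ℝ) := by
      funext t
      rw [phiW, hdeg _ (hκmax t).le, zero_div]
    rw [h0]
    exact continuousOn_const

/-! ### lower bound : α ≤ pFun h₀ -/

lemma pFun_ge_alpha (hψ : OmegaInf ψ) (hκ : MemK κ) (hx : MemM ψ x)
    (h1 : Tendsto (fun n : ℕ => ψ (κ (n:ℝ)) / ψ (κ ((n:ℝ) + 1))) atTop (nhds 1)) :
    limsup (phiW ψ x) atTop ≤ pFun (fun t => phiW ψ x (κ (max t 1))) := by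
  obtain ⟨M, hM0, hM⟩ := phiW_bound hψ hx
  set h₀ : ℝ → ℝ := fun t => phiW ψ x (κ (max t 1)) with hh₀
  have hκmax : ∀ t : ℝ, 0 < κ (max t 1) := fun t =>
    kappa_pos hκ (lt_of_lt_of_le one_pos (le_max_right t 1))
  have hM₀ : ∀ t ∈ Ici (0:ℝ), |h₀ t| ≤ M := fun t _ => hM _ (hκmax t)
  refine le_pFun ?_
  rintro r ⟨n, s, hn, hs, rfl⟩
  refine le_of_forall_pos_le_add fun ε hε => ?_
  have hfreq : ∃ᶠ t in atTop, limsup (phiW ψ x) atTop - ε ≤ avg h₀ n s t := by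
    rw [frequently_atTop]
    intro T₀
    set S : ℝ := ∑ j, s j with hS
    have hS0 : 0 ≤ S := Finset.sum_nonneg fun j _ => hs j
    obtain ⟨t, htT₀, ht1, ht⟩ := freq_high hψ hκ hx h1 hS0 hε T₀
    refine ⟨t, htT₀, ?_⟩
    have hterm : ∀ j : Fin n, limsup (phiW ψ x) atTop - ε ≤ h₀ (t + s j) := by
      intro j
      have hsj : s j ≤ S := Finset.single_le_sum (fun i _ => hs i) (Finset.mem_univ j)
      have hmem : t + s j ∈ Icc t (t + S) := ⟨le_add_of_nonneg_right (hs j), by linarith⟩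
      have hmax : max (t + s j) 1 = t + s j := max_eq_left (by linarith [hs j])
      have := ht (t + s j) hmem
      rw [hh₀]
      simp only
      rw [hmax]
      exact this
    rw [avg]
    have hn' : (0:ℝ) < n := by exact_mod_cast hn
    rw [le_div_iff₀ hn']
    calc (limsup (phiW ψ x) atTop - ε) * n
        = ∑ _j : Fin n, (limsup (phiW ψ x) atTop - ε) := by
          rw [Finset.sum_const, Finset.card_univ, Fintype.card_fin, nsmul_eq_mul]; ring
    _ ≤ ∑ j, h₀ (t + s j) := Finset.sum_le_sum fun j _ => hterm j
  have hb : IsBoundedUnder (· ≤ ·) atTop (avg h₀ n s) := bddAbove_avg hM₀ hn hs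
  have := le_limsup_of_frequently_le hfreq hb
  linarith

/-! ### upper bound : L(h₀) ≤ α for any Banach limit L -/

lemma isCb_shift {f : ℝ → ℝ} (hf : IsCb f) {s : ℝ} (hs : 0 ≤ s) :
    IsCb (fun t => f (t + s)) := by
  obtain ⟨hc, M, hM⟩ := hf
  refine ⟨?_, M, fun t ht => hM _ (mem_Ici.2 (add_nonneg (mem_Ici.1 ht) hs))⟩
  exact hc.comp (continuous_id.add continuous_const).continuousOn
    (fun t ht => mem_Ici.2 (add_nonneg (mem_Ici.1 ht) hs))

lemma isCb_const (c : ℝ) : IsCb (fun _ => c) :=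
  ⟨continuousOn_const, |c|, fun _ _ => le_rfl⟩

lemma BL_le_alpha (hψ : OmegaInf ψ) (hκ : MemK κ) (hx : MemM ψ x) (L : BanachLimitR) :
    fL L ψ κ x ≤ limsup (phiW ψ x) atTop := by
  obtain ⟨M, hM0, hM⟩ := phiW_bound hψ hx
  set α := limsup (phiW ψ x) atTop with hα
  set h₀ : ℝ → ℝ := fun t => phiW ψ x (κ (max t 1)) with hh₀
  have hCb : IsCb h₀ := h0_IsCb hψ hκ hx
  have hbddA : IsBoundedUnder (· ≤ ·) atTop (phiW ψ x) :=
    isBoundedUnder_of_eventually_le ((eventually_gt_atTop (0:ℝ)).mono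
      fun t ht => (abs_le.1 (hM t ht)).2)
  refine le_of_forall_pos_le_add fun ε hε => ?_
  have hev : ∀ᶠ v in atTop, phiW ψ x v < α + ε := by
    rw [hα]
    exact eventually_lt_of_limsup_lt (by rw [← hα]; linarith) hbddA
  obtain ⟨T, hT⟩ := eventually_atTop.1 hev
  obtain ⟨s₁, hs₁⟩ := eventually_atTop.1 (hκ.2.2.2.2.2.eventually_ge_atTop T)
  set s : ℝ := max s₁ 1 with hsdef
  have hs0 : (0:ℝ) ≤ s := le_trans zero_le_one (le_max_right _ _)
  have hshift : ∀ t ∈ Ici (0:ℝ), h₀ (t + s) ≤ α + ε := by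
    intro t ht
    have ht' := mem_Ici.1 ht
    have h1s : (1:ℝ) ≤ t + s := by
      have := le_max_right s₁ (1:ℝ)
      linarith
    have hmax : max (t + s) 1 = t + s := max_eq_left h1s
    have hTk : T ≤ κ (t + s) := hs₁ (t + s) (by
      have := le_max_left s₁ (1:ℝ)
      linarith)
    have := (hT _ hTk).le
    rw [hh₀]
    simp only
    rw [hmax]
    exact this
  -- Banach limit computation
  have hCbs : IsCb (fun t => h₀ (t + s)) := isCb_shift hCb hs0
  have e1 : L.toFun (fun t => h₀ (t + s)) = L.toFun h₀ := L.shift_inv h₀ hCb s hs0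
  have hCbneg : IsCb (fun t => (-1) * h₀ (t + s)) := by
    obtain ⟨hc, M', hM'⟩ := hCbs
    refine ⟨?_, M', fun t ht => ?_⟩
    · exact (continuousOn_const.mul hc)
    · rw [abs_mul, abs_neg, abs_one, one_mul]
      exact hM' t ht
  have hq : IsCb (fun t => (α + ε) + (-1) * h₀ (t + s)) := by
    obtain ⟨hc, M', hM'⟩ := hCbneg
    exact ⟨continuousOn_const.add hc, (|α + ε| + M'),
      fun t ht => (abs_add_le _ _).trans (add_le_add le_rfl (hM' t ht))⟩
  have hqpos : ∀ t ∈ Ici (0:ℝ), 0 ≤ (α + ε) + (-1) * h₀ (t + s) := by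
    intro t ht
    have := hshift t ht
    linarith
  have h3 : 0 ≤ L.toFun (fun t => (α + ε) + (-1) * h₀ (t + s)) := L.pos _ hq hqpos
  have h4 : L.toFun (fun t => (α + ε) + (-1) * h₀ (t + s))
      = L.toFun (fun _ => α + ε) + L.toFun (fun t => (-1) * h₀ (t + s)) :=
    L.map_add _ _ (isCb_const _) hCbneg
  have h5 : L.toFun (fun t => (-1) * h₀ (t + s)) = -(L.toFun (fun t => h₀ (t + s))) := by
    rw [L.map_smul (-1) _ hCbs]
    ring
  have h6 : L.toFun (fun _ => α + ε) = α + ε := by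
    have h7 := L.map_smul (α + ε) (fun _ => 1) (isCb_const 1)
    have h8 : (fun t : ℝ => (α + ε) * (fun _ : ℝ => (1:ℝ)) t) = fun _ : ℝ => α + ε := by
      funext t; simp
    rw [h8, L.map_one, mul_one] at h7
    exact h7
  have : fL L ψ κ x = L.toFun h₀ := rfl
  rw [this, ← e1]
  linarith [h3, h4, h5, h6]


end BLAux

open BLAux in

/-- if `ψ(κ(n))/ψ(κ(n+1)) → 1` then for every `x ∈ M(ψ)`
the Riesz semi-norm `ρ₁(x) = limsup_{t→∞} φ(x)(t)` equals
`sup { f_{L,κ}(x) : L ∈ BL(ℝ₊) }`. -/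

theorem limsup_phi_eq_sup_fL (ψ κ : ℝ → ℝ) (hψ : OmegaInf ψ) (hκ : MemK κ)
    (h1 : Tendsto (fun n : ℕ => ψ (κ (n:ℝ)) / ψ (κ ((n:ℝ) + 1))) atTop (nhds 1))
    (x : ℝ → ℝ) (hx : MemM ψ x) :
    limsup (phiW ψ x) atTop = sSup {r : ℝ | ∃ L : BanachLimitR, r = fL L ψ κ x} := by
  obtain ⟨M, hM0, hM⟩ := phiW_bound hψ hx
  set α := limsup (phiW ψ x) atTop with hα
  set h₀ : ℝ → ℝ := fun t => phiW ψ x (κ (max t 1)) with hh₀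
  have hκmax : ∀ t : ℝ, 0 < κ (max t 1) := fun t =>
    kappa_pos hκ (lt_of_lt_of_le one_pos (le_max_right t 1))
  have hM₀ : ∀ t ∈ Ici (0:ℝ), |h₀ t| ≤ M := fun t _ => hM _ (hκmax t)
  have hVmem : h₀ ∈ V := ⟨M, hM₀⟩
  obtain ⟨F, hFle, hFv⟩ := exists_extension h₀ hVmem
  set L₀ := mkBL F hFle with hL₀def
  have hub : ∀ L : BanachLimitR, fL L ψ κ x ≤ α := fun L => BL_le_alpha hψ hκ hx L
  have hL₀val : fL L₀ ψ κ x = pFun h₀ := by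
    have : fL L₀ ψ κ x = L₀.toFun h₀ := rfl
    rw [this, hL₀def, mkBL_apply F hFle h₀ hVmem, hFv]
  have hge : α ≤ pFun h₀ := pFun_ge_alpha hψ hκ hx h1
  have heq : fL L₀ ψ κ x = α := le_antisymm (hub L₀) (by rw [hL₀val]; exact hge)
  apply le_antisymm
  · exact le_csSup ⟨α, by rintro r ⟨L, rfl⟩; exact hub L⟩ ⟨L₀, heq.symm⟩
  · exact csSup_le ⟨_, ⟨L₀, rfl⟩⟩ (by rintro r ⟨L, rfl⟩; exact hub L)
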